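/- arXiv:1805.04995 — 11 statements merged into one kernel-verified Lean document; each statement's English description precedes it below -/
import Mathlib

section
/- Every automorphism h of the extended bicyclic semigroup C_Z is of the form h((i,j)) = (i+k, j+k) for some integer k; consequently the automorphism group Aut(C_Z) is isomorphic to the additive group of integers. -/
/-- The extended bicyclic semigroup operation on ℤ × ℤ. -/
def emul (x y : ℤ × ℤ) : ℤ × ℤ :=
  if x.2 < y.1 then (x.1 - x.2 + y.1, y.2)
  else if x.2 = y.1 then (x.1, y.2)
  else (x.1, y.2 + x.2 - y.1)

lemma emul_diag_diag (a b : ℤ) : emul (a, a) (b, b) = (max a b, max a b) := by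
  simp only [emul]
  split_ifs <;> simp [Prod.ext_iff] <;> omega

lemma emul_left_id (i j : ℤ) : emul (i, i) (i, j) = (i, j) := by
  simp [emul]

lemma emul_right_id (i j : ℤ) : emul (i, j) (j, j) = (i, j) := by
  simp [emul]

lemma left_absorb_le {c P Q : ℤ} (h : emul (c, c) (P, Q) = (P, Q)) : c ≤ P := by
  simp only [emul] at h
  split_ifs at h <;> simp [Prod.ext_iff] at h <;> omega

lemma right_absorb_le {d P Q : ℤ} (h : emul (P, Q) (d, d) = (P, Q)) : d ≤ Q := by
  simp only [emul] at h
  split_ifs at h <;> simp [Prod.ext_iff] at h <;> omega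

lemma idem_diag {p : ℤ × ℤ} (h : emul p p = p) : p.1 = p.2 := by
  obtain ⟨a, b⟩ := p
  simp only [emul] at h ⊢
  split_ifs at h <;> simp [Prod.ext_iff] at h <;> omega

/-- Any automorphism (with explicit two-sided inverse) shifts the diagonal. -/
lemma diag_shift (h g : ℤ × ℤ → ℤ × ℤ) (hgh : ∀ p, g (h p) = p) (hhg : ∀ p, h (g p) = p)
    (hm : ∀ x y, h (emul x y) = emul (h x) (h y))
    (gm : ∀ x y, g (emul x y) = emul (g x) (g y)) :
    ∃ k : ℤ, ∀ a : ℤ, h (a, a) = (a + k, a + k) := by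
  set f : ℤ → ℤ := fun a => (h (a, a)).1 with hf
  have hdiag : ∀ a : ℤ, h (a, a) = (f a, f a) := by
    intro a
    have hid : emul (h (a, a)) (h (a, a)) = h (a, a) := by
      rw [← hm]
      congr 1
      simpa using emul_diag_diag a a
    have := idem_diag hid
    exact Prod.ext rfl this.symm
  have hmono : ∀ a b : ℤ, a ≤ b → f a ≤ f b := by
    intro a b hab
    have h1 : h (b, b) = emul (h (a, a)) (h (b, b)) := by
      rw [← hm]
      congr 1
      rw [emul_diag_diag]
      simp [max_eq_right hab]
    rw [hdiag a, hdiag b, emul_diag_diag] at h1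
    have := congrArg Prod.fst h1
    simp at this
    omega
  have hinj : ∀ a b : ℤ, f a = f b → a = b := by
    intro a b hab
    have : h (a, a) = h (b, b) := by rw [hdiag a, hdiag b, hab]
    have := congrArg g this
    rw [hgh, hgh] at this
    exact congrArg Prod.fst this
  have hsurj : ∀ b : ℤ, ∃ a : ℤ, f a = b := by
    intro b
    have hid : emul (g (b, b)) (g (b, b)) = g (b, b) := by
      rw [← gm]
      congr 1
      simpa using emul_diag_diag b b
    have hdg := idem_diag hid
    obtain ⟨c, hc⟩ : ∃ c, g (b, b) = (c, c) :=
      ⟨(g (b, b)).1, by rw [Prod.ext_iff]; exact ⟨rfl, hdg.symm⟩⟩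
    refine ⟨c, ?_⟩
    have h2 : h (c, c) = (b, b) := by rw [← hc]; exact hhg _
    simpa [hf] using congrArg Prod.fst h2
  have hsucc : ∀ a : ℤ, f (a + 1) = f a + 1 := by
    intro a
    have hlt : f a < f (a + 1) := by
      have h1 := hmono a (a + 1) (by omega)
      have h2 : f a ≠ f (a + 1) := fun e => by have := hinj _ _ e; omega
      omega
    by_contra hne
    obtain ⟨c, hc⟩ := hsurj (f a + 1)
    have hac : a < c := by
      by_contra hcon
      have := hmono c a (by omega)
      omega
    have hca : c < a + 1 := by
      by_contra hcon
      have := hmono (a + 1) c (by omega)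
      omega
    omega
  refine ⟨f 0, ?_⟩
  have key : ∀ a : ℤ, f a = a + f 0 := by
    intro a
    induction a using Int.induction_on with
    | zero => omega
    | succ n ih => have := hsucc n; push_cast at *; omega
    | pred n ih =>
      have hs := hsucc (-(n : ℤ) - 1)
      rw [show -(n : ℤ) - 1 + 1 = -(n : ℤ) by ring] at hs
      omega
  intro a
  rw [hdiag a, key a]

/-- Componentwise lower bound for automorphisms shifting the diagonal by k. -/
lemma aut_lower (h : ℤ × ℤ → ℤ × ℤ) (hm : ∀ x y, h (emul x y) = emul (h x) (h y))
    (k : ℤ) (hk : ∀ a : ℤ, h (a, a) = (a + k, a + k)) :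
    ∀ p : ℤ × ℤ, p.1 + k ≤ (h p).1 ∧ p.2 + k ≤ (h p).2 := by
  rintro ⟨i, j⟩
  constructor
  · have h1 : h (i, j) = emul (h (i, i)) (h (i, j)) := by
      rw [← hm, emul_left_id]
    rw [hk i] at h1
    have : emul (i + k, i + k) ((h (i, j)).1, (h (i, j)).2) = ((h (i, j)).1, (h (i, j)).2) := by
      simpa using h1.symm
    exact left_absorb_le this
  · have h1 : h (i, j) = emul (h (i, j)) (h (j, j)) := by
      rw [← hm, emul_right_id]
    rw [hk j] at h1
    have : emul ((h (i, j)).1, (h (i, j)).2) (j + k, j + k) = ((h (i, j)).1, (h (i, j)).2) := by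
      simpa using h1.symm
    exact right_absorb_le this

/-- Classification of automorphisms of the extended bicyclic semigroup. -/
lemma aut_classification (h : ℤ × ℤ → ℤ × ℤ) (hb : Function.Bijective h)
    (hm : ∀ x y, h (emul x y) = emul (h x) (h y)) :
    ∃ k : ℤ, ∀ p : ℤ × ℤ, h p = (p.1 + k, p.2 + k) := by
  set e := Equiv.ofBijective h hb with he
  set g : ℤ × ℤ → ℤ × ℤ := fun p => e.symm p with hg
  have hgh : ∀ p, g (h p) = p := fun p => e.symm_apply_apply p
  have hhg : ∀ p, h (g p) = p := fun p => e.apply_symm_apply p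
  have gm : ∀ x y, g (emul x y) = emul (g x) (g y) := by
    intro x y
    apply hb.1
    rw [hhg, hm, hhg, hhg]
  obtain ⟨k, hk⟩ := diag_shift h g hgh hhg hm gm
  obtain ⟨k', hk'⟩ := diag_shift g h hhg hgh gm hm
  have hkk' : k' = -k := by
    have h1 := hk' k
    have h2 : g (k, k) = (0, 0) := by
      have := hgh (0, 0)
      rw [show h (0, 0) = (k, k) from by simpa using hk 0] at this
      exact this
    rw [h2] at h1
    have := congrArg Prod.fst h1
    simp at this
    omega
  have hl := aut_lower h hm k hk
  have hl' := aut_lower g gm k' hk'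
  refine ⟨k, ?_⟩
  intro p
  have h1 := hl p
  have h2 := hl' (h p)
  rw [hgh p, hkk'] at h2
  exact Prod.ext (by omega) (by omega)

def shiftmap (k : ℤ) : ℤ × ℤ → ℤ × ℤ := fun p => (p.1 + k, p.2 + k)

lemma shift_hom (k : ℤ) : ∀ x y, shiftmap k (emul x y) = emul (shiftmap k x) (shiftmap k y) := by
  rintro ⟨a, b⟩ ⟨c, d⟩
  simp only [emul, shiftmap]
  by_cases h1 : b < c <;> by_cases h2 : b = c <;> simp [h1, h2, Prod.ext_iff] <;> omega

lemma shift_bij (k : ℤ) : Function.Bijective (shiftmap k) := by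
  constructor
  · rintro ⟨a, b⟩ ⟨c, d⟩ hcd
    simp [shiftmap, Prod.ext_iff] at hcd ⊢
    omega
  · rintro ⟨a, b⟩
    exact ⟨(a - k, b - k), by simp [shiftmap]⟩

theorem aut_description_and_group :
    (∀ h : ℤ × ℤ → ℤ × ℤ,
      Function.Bijective h → (∀ x y, h (emul x y) = emul (h x) (h y)) →
        ∃ k : ℤ, ∀ p : ℤ × ℤ, h p = (p.1 + k, p.2 + k)) ∧
    ∃ Φ : ℤ ≃ {h : ℤ × ℤ → ℤ × ℤ //
        Function.Bijective h ∧ ∀ x y, h (emul x y) = emul (h x) (h y)},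
      ∀ k₁ k₂ : ℤ, ((Φ (k₁ + k₂)) : ℤ × ℤ → ℤ × ℤ)
        = ((Φ k₁) : ℤ × ℤ → ℤ × ℤ) ∘ ((Φ k₂) : ℤ × ℤ → ℤ × ℤ) := by
  constructor
  · exact aut_classification
  · set F : ℤ → {h : ℤ × ℤ → ℤ × ℤ //
        Function.Bijective h ∧ ∀ x y, h (emul x y) = emul (h x) (h y)} :=
      fun k => ⟨shiftmap k, shift_bij k, shift_hom k⟩ with hF
    have hFb : Function.Bijective F := by
      constructor
      · intro k₁ k₂ hk
        have : shiftmap k₁ (0, 0) = shiftmap k₂ (0, 0) := by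
          rw [show shiftmap k₁ = (F k₁ : ℤ × ℤ → ℤ × ℤ) from rfl, hk]
        simpa [shiftmap, Prod.ext_iff] using this
      · rintro ⟨h, hb, hm⟩
        obtain ⟨k, hk⟩ := aut_classification h hb hm
        refine ⟨k, ?_⟩
        apply Subtype.ext
        funext p
        simp [hF, shiftmap, hk p]
    refine ⟨Equiv.ofBijective F hFb, ?_⟩
    intro k₁ k₂
    show shiftmap (k₁ + k₂) = shiftmap k₁ ∘ shiftmap k₂
    funext p
    simp [shiftmap]
    constructor <;> ring
end

section
/- For all integers m, n, the variant C_Z^{m,n} is a simple semigroup: for every element s of C_Z^{m,n}, the two-sided ideal generated by s is all of C_Z^{m,n}. -/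
/-- The variant (sandwich) operation on ℤ × ℤ with sandwich element (m, n). -/
def vmul (m n : ℤ) (x y : ℤ × ℤ) : ℤ × ℤ := emul (emul x (m, n)) y

lemma emul_eq (x y : ℤ × ℤ) :
    emul x y = (x.1 - x.2 + max x.2 y.1, y.2 - y.1 + max x.2 y.1) := by
  unfold emul
  split_ifs with h1 h2 <;> simp [Prod.ext_iff] <;> omega

theorem variant_simple (m n : ℤ) (s t : ℤ × ℤ) :
    ∃ u v : ℤ × ℤ, vmul m n (vmul m n u s) v = t := by
  refine ⟨(t.1 + n - max n s.1 + (s.2 - s.1 + max n s.1)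
      - max (s.2 - s.1 + max n s.1) m, m), (n - m + max (s.2 - s.1 + max n s.1) m, t.2), ?_⟩
  simp only [vmul, emul_eq, Prod.ext_iff]
  constructor <;> simp <;> omega
end

section
/- Let m, n be integers. An element (a,b) of the variant C_Z^{m,n} satisfies (a,b) *_{m,n} (a,b) = (a,b) if and only if (a,b) = (n+i, m+i) for some non-negative integer i. -/
theorem variant_idempotents (m n a b : ℤ) :
    vmul m n (a, b) (a, b) = (a, b) ↔ ∃ i : ℕ, a = n + i ∧ b = m + i := by
  simp only [vmul, emul]
  constructor
  · intro h
    split_ifs at h <;> simp only [Prod.mk.injEq] at h <;>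
      exact ⟨(a - n).toNat, by omega, by omega⟩
  · rintro ⟨i, rfl, rfl⟩
    split_ifs <;> simp_all [Prod.ext_iff] <;> omega
end

section
/- Let m, n be integers and write e_i = (n+i, m+i) for i ∈ N_0 for the idempotents of the variant C_Z^{m,n}. Then e_i ≼ e_j (i.e., e_i *_{m,n} e_j = e_j *_{m,n} e_i = e_i) if and only if j ≤ i. Hence the idempotents of C_Z^{m,n} under the natural partial order form a chain order-isomorphic to (N_0, max). -/
lemma vmul_idem (m n : ℤ) (i j : ℕ) :
    vmul m n (n + i, m + i) (n + j, m + j)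
      = (n + (max i j : ℕ), m + (max i j : ℕ)) := by
  simp only [vmul, emul, Prod.mk.injEq, Prod.ext_iff]
  push_cast
  split_ifs <;> constructor <;> simp_all <;> omega

theorem variant_idempotent_order (m n : ℤ) :
    (∀ i j : ℕ,
      (vmul m n (n + i, m + i) (n + j, m + j) = (n + (i : ℤ), m + i) ∧
       vmul m n (n + j, m + j) (n + i, m + i) = (n + (i : ℤ), m + i)) ↔ j ≤ i) ∧
    (∀ i j : ℕ,
      vmul m n (n + i, m + i) (n + j, m + j)
        = (n + (max i j : ℕ), m + (max i j : ℕ))) := by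
  refine ⟨fun i j => ?_, fun i j => vmul_idem m n i j⟩
  rw [vmul_idem, vmul_idem, max_comm j i]
  constructor
  · rintro ⟨h, -⟩
    simp only [Prod.ext_iff] at h
    have h2 : ((max i j : ℕ) : ℤ) = i := by omega
    have h3 : max i j = i := by exact_mod_cast h2
    omega
  · intro h
    rw [max_eq_left h]
    exact ⟨rfl, rfl⟩
end

section
/- Let m, n be integers. In the variant C_Z^{m,n}: for (a,b) with b ≥ m, the right ideal {(a,b)} ∪ (a,b)*_{m,n}C_Z^{m,n} equals {(x,y) : x ≥ a}; and for (a,b) with a ≥ n, the left ideal {(a,b)} ∪ C_Z^{m,n}*_{m,n}(a,b) equals {(x,y) : y ≥ b}. -/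
lemma emul_eq_s10 (a b c d : ℤ) : emul (a, b) (c, d) = (max a (a - b + c), max d (d + b - c)) := by
  simp only [emul]
  split_ifs <;> simp only [Prod.mk.injEq] <;> constructor <;> omega

lemma vmul_eq (m n a b c d : ℤ) :
    vmul m n (a, b) (c, d)
      = (max (max a (a - b + m)) (max a (a - b + m) - max n (n + b - m) + c),
         max d (d + max n (n + b - m) - c)) := by
  rw [vmul, emul_eq_s10, emul_eq_s10]

theorem variant_principal_ideals (m n a b : ℤ) :
    (m ≤ b → {p : ℤ × ℤ | p = (a, b) ∨ ∃ z : ℤ × ℤ, vmul m n (a, b) z = p}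
      = {p : ℤ × ℤ | a ≤ p.1}) ∧
    (n ≤ a → {p : ℤ × ℤ | p = (a, b) ∨ ∃ z : ℤ × ℤ, vmul m n z (a, b) = p}
      = {p : ℤ × ℤ | b ≤ p.2}) := by
  constructor
  · intro hb
    ext ⟨x, y⟩
    simp only [Set.mem_setOf_eq, Prod.mk.injEq]
    constructor
    · rintro (⟨h1, h2⟩ | ⟨⟨c, d⟩, hz⟩)
      · omega
      · rw [vmul_eq] at hz
        simp only [Prod.mk.injEq] at hz
        omega
    · intro hx
      right
      refine ⟨(n + b - m + x - a, y), ?_⟩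
      rw [vmul_eq]
      simp only [Prod.mk.injEq]
      omega
  · intro ha
    ext ⟨x, y⟩
    simp only [Set.mem_setOf_eq, Prod.mk.injEq]
    constructor
    · rintro (⟨h1, h2⟩ | ⟨⟨c, d⟩, hz⟩)
      · omega
      · rw [vmul_eq] at hz
        simp only [Prod.mk.injEq] at hz
        omega
    · intro hy
      right
      refine ⟨(x, m + a + y - b - n), ?_⟩
      rw [vmul_eq]
      simp only [Prod.mk.injEq]
      omega
end

section
/- Let m, n be integers. Two elements (a,b), (c,d) of the variant C_Z^{m,n} are R-equivalent (generate the same principal right ideal) if and only if a = c and (b = d or (b ≥ m and d ≥ m)). -/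
lemma mem_ideal (m n a b : ℤ) (p : ℤ × ℤ) :
    (∃ z : ℤ × ℤ, vmul m n (a, b) z = p) ↔ a + max (m - b) 0 ≤ p.1 := by
  constructor
  · rintro ⟨z, rfl⟩
    simp only [vmul, emul]
    split_ifs <;> simp_all <;> omega
  · intro h
    refine ⟨(n + max (b - m) 0 + (p.1 - (a + max (m - b) 0)), p.2), ?_⟩
    obtain ⟨p1, p2⟩ := p
    simp only [vmul, emul]
    split_ifs <;> rw [Prod.mk.injEq] <;> omega

theorem variant_R_relation (m n a b c d : ℤ) :
    ({p : ℤ × ℤ | p = (a, b) ∨ ∃ z : ℤ × ℤ, vmul m n (a, b) z = p}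
      = {p : ℤ × ℤ | p = (c, d) ∨ ∃ z : ℤ × ℤ, vmul m n (c, d) z = p})
    ↔ (a = c ∧ (b = d ∨ (m ≤ b ∧ m ≤ d))) := by
  rw [Set.ext_iff]
  simp only [Set.mem_setOf_eq, mem_ideal]
  constructor
  · intro h
    have h1 := (h (a, b)).mp (Or.inl rfl)
    have h2 := (h (c, d)).mpr (Or.inl rfl)
    rcases h1 with h1 | h1
    · rw [Prod.ext_iff] at h1
      exact ⟨h1.1, Or.inl h1.2⟩
    · rcases h2 with h2 | h2
      · rw [Prod.ext_iff] at h2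
        exact ⟨h2.1.symm, Or.inl h2.2.symm⟩
      · simp only at h1 h2
        constructor
        · omega
        · right; omega
  · rintro ⟨rfl, rfl | ⟨hb, hd⟩⟩
    · intro p; rfl
    · intro p
      constructor
      · rintro (rfl | hp)
        · right; simp; omega
        · right; omega
      · rintro (rfl | hp)
        · right; simp; omega
        · right; omega
end

section
/- Let m, n be integers. In the variant C_Z^{m,n}, the Green H-relation is trivial: (a,b) H (c,d) if and only if (a,b) = (c,d). -/
lemma key1 (m n a b : ℤ) (z : ℤ × ℤ) :
    a ≤ (vmul m n (a, b) z).1 ∧ a - b + m ≤ (vmul m n (a, b) z).1 := by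
  simp only [vmul, emul]
  split_ifs <;> simp_all <;> omega

lemma key2 (m n a b : ℤ) (z : ℤ × ℤ) :
    b ≤ (vmul m n z (a, b)).2 ∧ b - a + n ≤ (vmul m n z (a, b)).2 := by
  simp only [vmul, emul]
  split_ifs <;> simp_all <;> omega

theorem variant_H_trivial (m n a b c d : ℤ) :
    (({p : ℤ × ℤ | p = (a, b) ∨ ∃ z : ℤ × ℤ, vmul m n (a, b) z = p}
        = {p : ℤ × ℤ | p = (c, d) ∨ ∃ z : ℤ × ℤ, vmul m n (c, d) z = p}) ∧
     ({p : ℤ × ℤ | p = (a, b) ∨ ∃ z : ℤ × ℤ, vmul m n z (a, b) = p}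
        = {p : ℤ × ℤ | p = (c, d) ∨ ∃ z : ℤ × ℤ, vmul m n z (c, d) = p}))
    ↔ ((a, b) : ℤ × ℤ) = (c, d) := by
  constructor
  · rintro ⟨hR, hL⟩
    rw [Set.ext_iff] at hR hL
    have h1 := (hR (c, d)).2 (Or.inl rfl)
    have h2 := (hR (a, b)).1 (Or.inl rfl)
    have h3 := (hL (c, d)).2 (Or.inl rfl)
    have h4 := (hL (a, b)).1 (Or.inl rfl)
    simp only [Set.mem_setOf_eq, Prod.mk.injEq] at h1 h2 h3 h4
    rcases h1 with ⟨hca, hdb⟩ | ⟨z1, hz1⟩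
    · exact Prod.ext hca.symm hdb.symm
    rcases h2 with ⟨hac, hbd⟩ | ⟨z2, hz2⟩
    · exact Prod.ext hac hbd
    rcases h3 with ⟨hca, hdb⟩ | ⟨z3, hz3⟩
    · exact Prod.ext hca.symm hdb.symm
    rcases h4 with ⟨hac, hbd⟩ | ⟨z4, hz4⟩
    · exact Prod.ext hac hbd
    have k1 := key1 m n a b z1
    have k2 := key1 m n c d z2
    have k3 := key2 m n a b z3
    have k4 := key2 m n c d z4
    rw [hz1] at k1; rw [hz2] at k2; rw [hz3] at k3; rw [hz4] at k4
    simp only at k1 k2 k3 k4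
    exact Prod.ext (by omega) (by omega)
  · rintro h
    rw [Prod.mk.injEq] at h
    rw [h.1, h.2]
    exact ⟨rfl, rfl⟩
end

section
/- For every integer r and every positive integer p, the map (a,b) ↦ (a, b+p) is a semigroup isomorphism from the variant C_Z^{r,r} onto the variant C_Z^{r+p,r}. -/
theorem variant_iso_shift_right (r p : ℤ) (hp : 0 < p) :
    Function.Bijective (fun q : ℤ × ℤ => (q.1, q.2 + p)) ∧
    ∀ x y : ℤ × ℤ,
      (((vmul r r x y).1, (vmul r r x y).2 + p) : ℤ × ℤ)
        = vmul (r + p) r (x.1, x.2 + p) (y.1, y.2 + p) := by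
  constructor
  · exact Function.bijective_iff_has_inverse.mpr
      ⟨fun q => (q.1, q.2 - p), fun q => by simp, fun q => by simp⟩
  · intro x y
    simp only [vmul, emul]
    split_ifs <;> simp_all <;> omega
end

section
/- Any two variants C_Z^{m,n} and C_Z^{s,t} of the extended bicyclic semigroup (for arbitrary integers m, n, s, t) are isomorphic as semigroups. -/
theorem variants_isomorphic (m n s t : ℤ) :
    ∃ f : ℤ × ℤ → ℤ × ℤ, Function.Bijective f ∧
      ∀ x y : ℤ × ℤ, f (vmul m n x y) = vmul s t (f x) (f y) := by
  refine ⟨fun p => (p.1 + (t - n), p.2 + (s - m)), ?_, ?_⟩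
  · refine Function.bijective_iff_has_inverse.mpr
      ⟨fun p => (p.1 - (t - n), p.2 - (s - m)), fun p => ?_, fun p => ?_⟩ <;>
      simp [Prod.ext_iff]
  · intro x y
    obtain ⟨a, b⟩ := x
    obtain ⟨c, d⟩ := y
    simp only [vmul, emul, Prod.mk.injEq]
    split_ifs <;> dsimp only at * <;> simp only [Prod.mk.injEq, and_true, true_and] <;> omega
end

section
/- The variant C_Z^{0,0} is not finitely generated: for every finite subset F of C_Z^{0,0}, the subsemigroup generated by F omits infinitely many elements (x,y) with x < 0 and y < 0. -/
/-- Membership in the subsemigroup of the variant C_Z^{0,0} generated by F. -/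
inductive InGenV (F : Set (ℤ × ℤ)) : ℤ × ℤ → Prop
  | base {x : ℤ × ℤ} : x ∈ F → InGenV F x
  | mul {x y : ℤ × ℤ} : InGenV F x → InGenV F y → InGenV F (vmul 0 0 x y)

lemma vmul_coords (x y : ℤ × ℤ) :
    x.1 ≤ (vmul 0 0 x y).1 ∧ y.2 ≤ (vmul 0 0 x y).2 := by
  simp only [vmul, emul]
  split_ifs <;> simp_all <;> omega

lemma inGen_lb (F : Finset (ℤ × ℤ)) (N : ℤ) (hN : ∀ f ∈ F, N ≤ f.1 ∧ N ≤ f.2) :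
    ∀ p, InGenV (↑F) p → N ≤ p.1 ∧ N ≤ p.2 := by
  intro p h
  induction h with
  | base hx => exact hN _ hx
  | @mul x y hx hy ihx ihy =>
    have := vmul_coords x y
    constructor <;> omega

theorem variant_not_finitely_generated (F : Finset (ℤ × ℤ)) :
    {p : ℤ × ℤ | p.1 < 0 ∧ p.2 < 0 ∧ ¬ InGenV (↑F) p}.Infinite := by
  obtain ⟨M, hM⟩ := Finset.exists_le (F.image fun f => -(min f.1 f.2))
  have hN : ∀ f ∈ F, -M ≤ f.1 ∧ -M ≤ f.2 := by
    intro f hf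
    have := hM _ (Finset.mem_image_of_mem _ hf)
    omega
  apply Set.infinite_of_injective_forall_mem
    (f := fun k : ℕ => ((min (-M) 0 - 1 - k : ℤ), (min (-M) 0 - 1 - k : ℤ)))
  case hi =>
    intro a b hab
    simp only [Prod.mk.injEq] at hab
    omega
  case hf =>
    intro k
    refine ⟨by omega, by omega, fun h => ?_⟩
    have := inGen_lb F (-M) hN _ h
    simp at this
    omega
end

section
/- In the variant C_Z^{0,0}, for every non-negative integer k and integers k' ≤ k and l: the set of solutions (x,y) of the equation (k,k) *_{0,0} (x,y) = (k,l) is exactly {(s, l+s−k) : s ≤ k, s ∈ Z}, and the set of solutions of (x,y) *_{0,0} (k,k) = (l,k) is exactly {(l+s−k, s) : s ≤ k, s ∈ Z}. -/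
theorem shift_equation_solutions (k l : ℤ) (hk : 0 ≤ k) :
    (∀ x : ℤ × ℤ, vmul 0 0 (k, k) x = (k, l) ↔
      ∃ s : ℤ, s ≤ k ∧ x = (s, l + s - k)) ∧
    (∀ x : ℤ × ℤ, vmul 0 0 x (k, k) = (l, k) ↔
      ∃ s : ℤ, s ≤ k ∧ x = (l + s - k, s)) := by
  constructor <;> rintro ⟨a, b⟩ <;>
    simp only [vmul, emul, Prod.mk.injEq, Prod.ext_iff] <;>
    constructor
  · intro h
    split_ifs at h <;> simp_all <;> omega
  · rintro ⟨s, hs, ha, hb⟩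
    subst ha; subst hb
    split_ifs <;> simp_all <;> omega
  · intro h
    split_ifs at h <;> simp_all
    all_goals omega
  · rintro ⟨s, hs, ha, hb⟩
    subst ha; subst hb
    split_ifs <;> simp_all <;> omega
end
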